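/- arXiv:2505.10710 — 2 statements merged into one kernel-verified Lean document; each statement's English description precedes it below -/
import Mathlib

section
/- Define for a ∈ (0,1), n ≥ 1, and x ∈ ℝ∖{0}: P_{2n-1}(x;a) := 1/x − L_n((2x² − (1+a²))/(1−a²); a) / (x · L_n(−(1+a²)/(1−a²); a)), where L_n(x;a) := 2^{-(n-1)}(T_n(x) + ((1-a)/(1+a)) T_{n-1}(x)). Then P_{2n-1}(·;a) extends to an odd polynomial function on ℝ of degree 2n−1 (with value 0 at x = 0). -/
open Polynomial

noncomputable def Lpoly (n : ℕ) (a : ℝ) : Polynomial ℝ :=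
  Polynomial.C (((2 : ℝ) ^ (n - 1))⁻¹) *
    (Polynomial.Chebyshev.T ℝ (n : ℤ) +
      Polynomial.C ((1 - a) / (1 + a)) * Polynomial.Chebyshev.T ℝ ((n : ℤ) - 1))

/-- The matrix-inversion approximant `P_{2n-1}(x;a)` for `x ≠ 0`. -/
noncomputable def Pfun (n : ℕ) (a : ℝ) (x : ℝ) : ℝ :=
  1 / x - (Lpoly n a).eval ((2 * x ^ 2 - (1 + a ^ 2)) / (1 - a ^ 2)) /
    (x * (Lpoly n a).eval (-((1 + a ^ 2) / (1 - a ^ 2))))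

/-- Evaluation of the Chebyshev polynomial at `(s + s⁻¹)/2`. -/
lemma cheb_eval_half (s : ℝ) (hs : s ≠ 0) (n : ℕ) :
    (Polynomial.Chebyshev.T ℝ (n : ℤ)).eval ((s + s⁻¹) / 2) = (s ^ n + s⁻¹ ^ n) / 2 := by
  induction n using Nat.twoStepInduction with
  | zero => simp [Polynomial.Chebyshev.T_zero]
  | one => simp [Polynomial.Chebyshev.T_one]
  | more m ih1 ih2 =>
    have h : ((m + 2 : ℕ) : ℤ) = (m : ℤ) + 2 := by push_cast; ring
    rw [h, Polynomial.Chebyshev.T_add_two]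
    have h1 : ((m : ℤ) + 1) = ((m + 1 : ℕ) : ℤ) := by push_cast; ring
    simp only [eval_sub, eval_mul, eval_ofNat, eval_X, h1, ih1, ih2]
    have hsi : s * s⁻¹ = 1 := mul_inv_cancel₀ hs
    field_simp
    linear_combination (s * s⁻¹ ^ m - s⁻¹ * s⁻¹ ^ m) * hsi

lemma cheb_ne_zero (n : ℕ) : Polynomial.Chebyshev.T ℝ (n : ℤ) ≠ 0 := by
  intro h
  have := cheb_eval_half 1 one_ne_zero n
  rw [h] at this
  simp at this

lemma cheb_natDegree (n : ℕ) : (Polynomial.Chebyshev.T ℝ (n : ℤ)).natDegree = n := by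
  induction n using Nat.twoStepInduction with
  | zero => simp [Polynomial.Chebyshev.T_zero]
  | one => simp [Polynomial.Chebyshev.T_one]
  | more m ih1 ih2 =>
    have h : ((m + 2 : ℕ) : ℤ) = (m : ℤ) + 2 := by push_cast; ring
    rw [h, Polynomial.Chebyshev.T_add_two]
    have h1 : ((m : ℤ) + 1) = ((m + 1 : ℕ) : ℤ) := by push_cast; ring
    rw [h1]
    have h2X : (2 * X : ℝ[X]) = C 2 * X := by
      rw [map_ofNat]
    have hprod : (2 * X * Polynomial.Chebyshev.T ℝ ((m + 1 : ℕ) : ℤ)).natDegree = m + 2 := by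
      rw [h2X, mul_assoc, natDegree_C_mul (two_ne_zero),
        natDegree_mul X_ne_zero (cheb_ne_zero (m + 1)), natDegree_X, ih2]
      omega
    rw [natDegree_sub_eq_left_of_natDegree_lt, hprod]
    rw [hprod, ih1]; omega

theorem Pfun_extends_to_odd_polynomial (n : ℕ) (hn : 1 ≤ n) (a : ℝ)
    (ha : a ∈ Set.Ioo (0 : ℝ) 1) :
    ∃ p : Polynomial ℝ, p.natDegree = 2 * n - 1 ∧
      (∀ x : ℝ, p.eval (-x) = -p.eval x) ∧ p.eval 0 = 0 ∧
      ∀ x : ℝ, x ≠ 0 → p.eval x = Pfun n a x := by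
  obtain ⟨ha0, ha1⟩ := ha
  obtain ⟨m, rfl⟩ : ∃ m, n = m + 1 := ⟨n - 1, by omega⟩
  have h1a : (0:ℝ) < 1 - a := by linarith
  have h1a' : (0:ℝ) < 1 + a := by linarith
  have hb : (0:ℝ) < 1 - a ^ 2 := by nlinarith
  have hbne : (1:ℝ) - a ^ 2 ≠ 0 := ne_of_gt hb
  have ht : (1:ℝ) < (1 + a) / (1 - a) := (one_lt_div h1a).mpr (by linarith)
  -- the point where we evaluate, written via s = -(1+a)/(1-a)
  set s : ℝ := -((1 + a) / (1 - a)) with hs_def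
  have hs : s ≠ 0 := by
    rw [hs_def]
    exact neg_ne_zero.mpr (ne_of_gt (by linarith))
  have hs_inv : s⁻¹ = -((1 - a) / (1 + a)) := by
    rw [hs_def, inv_neg, inv_div]
  have hpoint : -((1 + a ^ 2) / (1 - a ^ 2)) = (s + s⁻¹) / 2 := by
    rw [hs_def, hs_inv]
    field_simp
    ring
  have hs_sq : s ^ 2 ≠ 1 := by
    have : (1:ℝ) < s ^ 2 := by
      rw [hs_def, neg_pow]
      simp only [Even.neg_pow (by norm_num : Even 2)]
      nlinarith
    exact ne_of_gt this
  have hk0 : (((2:ℝ) ^ (m + 1 - 1))⁻¹) ≠ 0 := by positivity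
  have hkne : (1 - a) / (1 + a) ≠ 0 := by
    apply div_ne_zero <;> intro h <;> nlinarith
  set c : ℝ := (Lpoly (m + 1) a).eval (-((1 + a ^ 2) / (1 - a ^ 2))) with hc_def
  -- compute c
  have hTm : (((m + 1 : ℕ) : ℤ) - 1) = ((m : ℕ) : ℤ) := by push_cast; ring
  have hc_val : c = ((2:ℝ) ^ (m + 1 - 1))⁻¹ *
      ((s ^ (m + 1) + s⁻¹ ^ (m + 1)) / 2 + (1 - a) / (1 + a) * ((s ^ m + s⁻¹ ^ m) / 2)) := by
    rw [hc_def, Lpoly, hpoint]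
    simp only [eval_mul, eval_C, eval_add, hTm, cheb_eval_half s hs]
  have hc_ne : c ≠ 0 := by
    rw [hc_val]
    apply mul_ne_zero hk0
    have key : (s ^ (m + 1) + s⁻¹ ^ (m + 1)) / 2 + (1 - a) / (1 + a) * ((s ^ m + s⁻¹ ^ m) / 2)
        = s ^ m * (s ^ 2 - 1) / (2 * s) := by
      rw [show (1 - a) / (1 + a) = -s⁻¹ by rw [hs_inv]; ring]
      field_simp
      linear_combination s⁻¹ ^ m * mul_inv_cancel₀ hs
    rw [key]
    apply div_ne_zero
    · apply mul_ne_zero (pow_ne_zero _ hs)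
      intro h
      apply hs_sq
      linarith [sub_eq_zero.mp h]
    · simp [hs]
  -- the inner quadratic
  set u : ℝ := 2 / (1 - a ^ 2) with hu_def
  have hu : u ≠ 0 := by
    rw [hu_def]; positivity
  set v : ℝ := (1 + a ^ 2) / (1 - a ^ 2) with hv_def
  set g : ℝ[X] := C u * X ^ 2 - C v with hg_def
  have hg_eval : ∀ x : ℝ, g.eval x = (2 * x ^ 2 - (1 + a ^ 2)) / (1 - a ^ 2) := by
    intro x
    simp only [hg_def, eval_sub, eval_mul, eval_C, eval_pow, eval_X, hu_def, hv_def]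
    field_simp
  have hg0 : g.eval 0 = -v := by simp [hg_def]
  have hg_deg : g.natDegree = 2 := by
    rw [hg_def, natDegree_sub_C, natDegree_C_mul_X_pow _ _ hu]
  -- the even numerator polynomial
  set Q : ℝ[X] := C c - (Lpoly (m + 1) a).comp g with hQ_def
  have hL_deg : (Lpoly (m + 1) a).natDegree = m + 1 := by
    rw [Lpoly, natDegree_C_mul hk0, hTm]
    rw [natDegree_add_eq_left_of_natDegree_lt, cheb_natDegree]
    rw [cheb_natDegree, natDegree_C_mul hkne, cheb_natDegree]
    omega
  have hQ_deg : Q.natDegree = 2 * (m + 1) := by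
    rw [hQ_def, show C c - (Lpoly (m + 1) a).comp g = -((Lpoly (m + 1) a).comp g - C c) by ring,
      natDegree_neg, natDegree_sub_C, natDegree_comp, hL_deg, hg_deg]
    ring
  have hQ_ne : Q ≠ 0 := by
    intro h
    have h2 := hQ_deg
    rw [h, natDegree_zero] at h2
    omega
  have hQ0 : Q.eval 0 = 0 := by
    simp only [hQ_def, eval_sub, eval_C, eval_comp, hg0]
    rw [show (Lpoly (m + 1) a).eval (-v) = c by rw [hc_def, hv_def]]
    ring
  have hQeven : ∀ x : ℝ, Q.eval (-x) = Q.eval x := by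
    intro x
    simp only [hQ_def, eval_sub, eval_C, eval_comp]
    congr 2
    simp [hg_def]
  obtain ⟨q, hq⟩ : X ∣ Q := by
    rw [X_dvd_iff, coeff_zero_eq_eval_zero]
    exact hQ0
  have hq_ne : q ≠ 0 := by
    intro h
    apply hQ_ne
    rw [hq, h, mul_zero]
  have hq_deg : q.natDegree = 2 * (m + 1) - 1 := by
    have := hQ_deg
    rw [hq, natDegree_mul X_ne_zero hq_ne, natDegree_X] at this
    omega
  -- oddness, first on x ≠ 0, then everywhere
  have hoddall : ∀ x : ℝ, (C c⁻¹ * q).eval (-x) = -(C c⁻¹ * q).eval x := by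
    have hodd : ∀ x : ℝ, x ≠ 0 → q.eval (-x) = -q.eval x := by
      intro x hx
      have h1 : Q.eval (-x) = Q.eval x := hQeven x
      rw [hq] at h1
      simp only [eval_mul, eval_X] at h1
      have h2 : x * (q.eval (-x) + q.eval x) = 0 := by linear_combination -h1
      rcases mul_eq_zero.mp h2 with h | h
      · exact absurd h hx
      · linarith
    have hzero : q.comp (-X) + q = 0 := by
      apply eq_zero_of_infinite_isRoot
      have hinf : ({0}ᶜ : Set ℝ).Infinite := (Set.finite_singleton 0).infinite_compl
      apply Set.Infinite.mono _ hinf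
      intro x hx
      simp only [Set.mem_compl_iff, Set.mem_singleton_iff] at hx
      simp only [Set.mem_setOf_eq, IsRoot, eval_add, eval_comp, eval_neg, eval_X]
      rw [hodd x hx]
      ring
    intro x
    have := congrArg (eval x) hzero
    simp only [eval_add, eval_comp, eval_neg, eval_X, eval_zero] at this
    simp only [eval_mul, eval_C]
    have hq' : q.eval (-x) = -q.eval x := by linarith
    rw [hq']
    ring
  -- the odd polynomial
  refine ⟨C c⁻¹ * q, ?_, hoddall, ?_, ?_⟩
  · rw [natDegree_C_mul (inv_ne_zero hc_ne), hq_deg]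
  · -- value at 0
    have h0 := hoddall 0
    rw [neg_zero] at h0
    linarith
  · -- agreement with Pfun
    intro x hx
    have hQx : Q.eval x = x * q.eval x := by rw [hq]; simp
    have hLx : (Lpoly (m + 1) a).eval ((2 * x ^ 2 - (1 + a ^ 2)) / (1 - a ^ 2)) = c - x * q.eval x := by
      have := hQx
      simp only [hQ_def, eval_sub, eval_C, eval_comp, hg_eval x] at this
      linarith
    rw [Pfun, hLx, ← hc_def]
    simp only [eval_mul, eval_C]
    field_simp
    ring
end

section
/- Let P ∈ ℂ[z] of degree d with |P(z)| ≤ 1 on 𝕋 and P not unimodular-constant times a Blaschke-type product making 1−|P|² ≡ 0. Then there exists Q ∈ ℂ[z] with deg Q ≤ d such that |P(z)|² + |Q(z)|² = 1 for all z ∈ 𝕋. -/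
open Complex Polynomial Filter

private lemma evalMapConj (T : Polynomial ℂ) (z : ℂ) :
    (T.map (starRingEnd ℂ)).eval z = (starRingEnd ℂ) (T.eval ((starRingEnd ℂ) z)) := by
  rw [eval_map]
  have := Polynomial.eval₂_hom (starRingEnd ℂ) ((starRingEnd ℂ) z) (p := T)
  simpa using this

private lemma natDegree_reflect_le {N : ℕ} (T : Polynomial ℂ) (hT : T.natDegree ≤ N) :
    (reflect N T).natDegree ≤ N := by
  rw [natDegree_le_iff_coeff_eq_zero]
  intro i hi
  rw [coeff_reflect, revAt_eq_self_of_lt hi]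
  exact coeff_eq_zero_of_natDegree_lt (lt_of_le_of_lt hT hi)

private lemma evalReflect {N : ℕ} (T : Polynomial ℂ) (hT : T.natDegree ≤ N) {z : ℂ}
    (hz : z ≠ 0) : (reflect N T).eval z = z ^ N * T.eval z⁻¹ := by
  rw [eval_eq_sum_range' (Nat.lt_succ_of_le (natDegree_reflect_le T hT)),
    eval_eq_sum_range' (Nat.lt_succ_of_le hT)]
  rw [Finset.mul_sum]
  rw [← Finset.sum_range_reflect]
  apply Finset.sum_congr rfl
  intro i hi
  rw [Finset.mem_range, Nat.lt_succ_iff] at hi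
  have h0 : N.succ - 1 - i = N - i := by omega
  rw [h0, coeff_reflect, revAt_le (by omega : N - i ≤ N), (by omega : N - (N - i) = i)]
  have : z ^ (N - i) = z ^ N * z⁻¹ ^ i := by
    rw [inv_pow, eq_comm, mul_inv_eq_iff_eq_mul₀ (pow_ne_zero _ hz), ← pow_add,
      (by omega : N - i + i = N)]
  rw [this]; ring

private lemma circleInfinite : {z : ℂ | ‖z‖ = 1}.Infinite := by
  have hinj : Set.InjOn (fun θ : ℝ => Complex.exp (θ * Complex.I)) (Set.Ioo 0 1) := by
    intro a ha b hb hab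
    simp only at hab
    rw [Complex.exp_eq_exp_iff_exists_int] at hab
    obtain ⟨n, hn⟩ := hab
    have hz : ((a - b - n * (2 * Real.pi) : ℝ) : ℂ) * Complex.I = 0 := by
      push_cast
      linear_combination hn
    rcases mul_eq_zero.1 hz with h | h
    swap
    · exact absurd h Complex.I_ne_zero
    have h2 : a = b + n * (2 * Real.pi) := by
      have := Complex.ofReal_eq_zero.1 h
      linarith
    have hpi : (2:ℝ) < 2 * Real.pi := by nlinarith [Real.pi_gt_three]
    rcases lt_trichotomy (n:ℝ) 0 with h | h | h
    · exfalso
      have : (n:ℝ) ≤ -1 := by exact_mod_cast Int.le_of_lt_add_one (by exact_mod_cast h)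
      nlinarith [ha.1, ha.2, hb.1, hb.2, Real.pi_gt_three]
    · have hn0 : n = 0 := by exact_mod_cast h
      rw [hn0] at h2; push_cast at h2; linarith
    · exfalso
      have : (1:ℝ) ≤ (n:ℝ) := by exact_mod_cast h
      nlinarith [ha.1, ha.2, hb.1, hb.2, Real.pi_gt_three]
  have : Set.Infinite ((fun θ : ℝ => Complex.exp (θ * Complex.I)) '' (Set.Ioo 0 1)) :=
    (Set.Ioo_infinite (by norm_num)).image hinj
  refine this.mono ?_
  rintro z ⟨θ, _, rfl⟩
  exact Complex.norm_exp_ofReal_mul_I θ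

private lemma conjCircle {z : ℂ} (hz : ‖z‖ = 1) : (starRingEnd ℂ) z = z⁻¹ := by
  have h1 : z * (starRingEnd ℂ) z = 1 := by
    rw [Complex.mul_conj]
    norm_cast
    rw [← Complex.sq_norm, hz]; norm_num
  have hz0 : z ≠ 0 := by intro h; rw [h] at hz; simp at hz
  field_simp
  linear_combination h1

private lemma circleNeZero {z : ℂ} (hz : ‖z‖ = 1) : z ≠ 0 := by
  intro h; rw [h] at hz; simp at hz




private lemma symOfNonneg (D : ℕ) (R : Polynomial ℂ) (hdeg : R.natDegree ≤ 2*D)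
    (H2 : ∀ z : ℂ, ‖z‖ = 1 → ∃ t : ℝ, 0 ≤ t ∧ R.eval z = (t:ℂ) * z^D) :
    R = reflect (2*D) (R.map (starRingEnd ℂ)) := by
  have hdm : (R.map (starRingEnd ℂ)).natDegree ≤ 2*D :=
    le_trans natDegree_map_le hdeg
  have key : ∀ z : ℂ, ‖z‖ = 1 →
      (reflect (2*D) (R.map (starRingEnd ℂ)) - R).eval z = 0 := by
    intro z hz
    have hz0 := circleNeZero hz
    obtain ⟨t, _, ht⟩ := H2 z hz
    rw [eval_sub, evalReflect _ hdm hz0, evalMapConj]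
    have hcz : (starRingEnd ℂ) z⁻¹ = z := by
      rw [map_inv₀, conjCircle hz, inv_inv]
    rw [hcz, ht, map_mul]
    have : (starRingEnd ℂ) ((t:ℂ)) = (t:ℂ) := Complex.conj_ofReal t
    rw [this, map_pow, conjCircle hz]
    have hzd : z ^ (2*D) * ((t:ℂ) * (z⁻¹)^D) = (t:ℂ) * z^D := by
      rw [inv_pow]
      field_simp
      ring
    rw [hzd, sub_self]
  have : (reflect (2*D) (R.map (starRingEnd ℂ)) - R) = 0 := by
    apply Polynomial.eq_zero_of_infinite_isRoot
    apply circleInfinite.mono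
    intro z hz
    exact key z hz
  linear_combination -this

private lemma slopeExp :
    Filter.Tendsto (fun u : ℝ => (Complex.exp ((u:ℂ) * Complex.I) - 1) / (u:ℂ))
      (nhdsWithin 0 {(0:ℝ)}ᶜ) (nhds Complex.I) := by
  have h1 : HasDerivAt (fun u : ℝ => (u : ℂ) * Complex.I) Complex.I 0 := by
    simpa using (Complex.ofRealCLM.hasDerivAt (x := (0:ℝ))).mul_const Complex.I
  have h2 : HasDerivAt (fun u : ℝ => Complex.exp ((u:ℂ) * Complex.I)) Complex.I 0 := by
    simpa using h1.cexp
  have h3 := hasDerivAt_iff_tendsto_slope.1 h2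
  refine h3.congr ?_
  intro u
  simp [slope, Function.comp]
  exact (div_eq_inv_mul _ _).symm

private lemma circleZ (w : ℂ) (hw : ‖w‖ = 1) (u : ℝ) :
    ‖w * Complex.exp ((u:ℂ) * Complex.I)‖ = 1 := by
  rw [norm_mul, hw, Complex.norm_exp_ofReal_mul_I, one_mul]

private lemma tendstoAux (D : ℕ) (S : Polynomial ℂ) (w : ℂ) (hw : ‖w‖ = 1) :
    Filter.Tendsto (fun u : ℝ => S.eval (w * Complex.exp ((u:ℂ) * Complex.I)) *
      ((w * Complex.exp ((u:ℂ) * Complex.I)) ^ D)⁻¹) (nhdsWithin 0 {(0:ℝ)}ᶜ)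
      (nhds (S.eval w * (w ^ D)⁻¹)) := by
  have hzc : Continuous (fun u : ℝ => w * Complex.exp ((u:ℂ) * Complex.I)) := by
    continuity
  have hc : Continuous (fun u : ℝ => S.eval (w * Complex.exp ((u:ℂ) * Complex.I))) :=
    (Polynomial.continuous S).comp hzc
  have hw0 : w ≠ 0 := circleNeZero hw
  have hinv : Filter.Tendsto (fun u : ℝ => ((w * Complex.exp ((u:ℂ) * Complex.I)) ^ D)⁻¹)
      (nhds 0) (nhds ((w ^ D)⁻¹)) := by
    have : Filter.Tendsto (fun u : ℝ => (w * Complex.exp ((u:ℂ) * Complex.I)) ^ D)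
        (nhds 0) (nhds (w ^ D)) := by
      exact Continuous.tendsto' (hzc.pow D) 0 _ (by simp)
    exact this.inv₀ (pow_ne_zero _ hw0)
  have h2 : Filter.Tendsto (fun u : ℝ => S.eval (w * Complex.exp ((u:ℂ) * Complex.I)))
      (nhds 0) (nhds (S.eval w)) := by
    have := hc.tendsto 0
    simpa using this
  exact ((h2.mul hinv).mono_left nhdsWithin_le_nhds)

private lemma evenMult (D : ℕ) (R : Polynomial ℂ) (hR : R ≠ 0)
    (H2 : ∀ z : ℂ, ‖z‖ = 1 → ∃ t : ℝ, 0 ≤ t ∧ R.eval z = (t:ℂ) * z ^ D)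
    {w : ℂ} (hw : ‖w‖ = 1) : Even (R.rootMultiplicity w) := by
  by_contra hodd
  rw [Nat.not_even_iff_odd] at hodd
  set m := R.rootMultiplicity w with hm
  set S := R /ₘ (X - C w) ^ m with hS
  have hfac : (X - C w) ^ m * S = R := R.pow_mul_divByMonic_rootMultiplicity_eq w
  have hSw : S.eval w ≠ 0 := eval_divByMonic_pow_rootMultiplicity_ne_zero w hR
  have hw0 : w ≠ 0 := circleNeZero hw
  set z : ℝ → ℂ := fun u => w * Complex.exp ((u:ℂ) * Complex.I) with hzdef
  have hz1 : ∀ u, ‖z u‖ = 1 := circleZ w hw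
  have hz0 : ∀ u, z u ≠ 0 := fun u => circleNeZero (hz1 u)
  choose t ht0 ht using fun u : ℝ => H2 (z u) (hz1 u)
  set g : ℝ → ℂ := fun u => R.eval (z u) / ((z u) ^ D * (u:ℂ) ^ m) with hgdef
  set c : ℂ := w ^ m * Complex.I ^ m * (S.eval w * (w ^ D)⁻¹) with hc
  -- the limit
  have hT : Filter.Tendsto g (nhdsWithin 0 {(0:ℝ)}ᶜ) (nhds c) := by
    have base := (Filter.Tendsto.mul
      (tendsto_const_nhds (x := w ^ m)) (slopeExp.pow m)).mul (tendstoAux D S w hw)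
    have heq : ∀ᶠ u in nhdsWithin 0 {(0:ℝ)}ᶜ, (fun u : ℝ => w ^ m *
        ((Complex.exp ((u:ℂ) * Complex.I) - 1) / (u:ℂ)) ^ m *
        (S.eval (z u) * ((z u) ^ D)⁻¹)) u = g u := by
      filter_upwards [self_mem_nhdsWithin] with u hu
      have hu0 : (u:ℂ) ≠ 0 := by
        simpa using Set.mem_compl_iff _ _ |>.1 hu
      have hRz : R.eval (z u) = w ^ m * (Complex.exp ((u:ℂ) * Complex.I) - 1) ^ m
          * S.eval (z u) := by
        have hzw : z u - w = w * (Complex.exp ((u:ℂ) * Complex.I) - 1) := by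
          simp only [hzdef]; ring
        rw [← hfac, eval_mul, eval_pow, eval_sub, eval_X, eval_C, hzw, mul_pow]
      rw [hgdef]
      simp only
      rw [hRz, div_pow]
      have hzu : z u ≠ 0 := hz0 u
      field_simp
    have : c = w ^ m * Complex.I ^ m * (S.eval w * (w ^ D)⁻¹) := hc
    exact Filter.Tendsto.congr' heq (by convert base using 2)
  -- real values
  have hgval : ∀ u : ℝ, u ≠ 0 → g u = ((t u / u ^ m : ℝ) : ℂ) := by
    intro u hu
    rw [hgdef]
    simp only
    rw [ht u]
    have hzu : z u ≠ 0 := hz0 u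
    have hu0 : (u:ℂ) ≠ 0 := by exact_mod_cast hu
    push_cast
    field_simp
  -- imaginary part of c is 0
  have hlt : nhdsWithin (0:ℝ) (Set.Ioi 0) ≤ nhdsWithin 0 {(0:ℝ)}ᶜ :=
    nhdsWithin_mono 0 (fun x hx => ne_of_gt hx)
  have hlt' : nhdsWithin (0:ℝ) (Set.Iio 0) ≤ nhdsWithin 0 {(0:ℝ)}ᶜ :=
    nhdsWithin_mono 0 (fun x hx => ne_of_lt hx)
  have him : c.im = 0 := by
    have h1 : Filter.Tendsto (fun u => (g u).im) (nhdsWithin 0 (Set.Ioi 0)) (nhds c.im) :=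
      (Complex.continuous_im.tendsto c).comp (hT.mono_left hlt)
    have h2 : Filter.Tendsto (fun u => (g u).im) (nhdsWithin 0 (Set.Ioi 0)) (nhds 0) := by
      apply Filter.Tendsto.congr' _ tendsto_const_nhds
      filter_upwards [self_mem_nhdsWithin] with u hu
      rw [hgval u (ne_of_gt hu)]
      exact (Complex.ofReal_im _).symm
    exact tendsto_nhds_unique h1 h2
  have hre1 : 0 ≤ c.re := by
    apply ge_of_tendsto ((Complex.continuous_re.tendsto c).comp (hT.mono_left hlt))
    filter_upwards [self_mem_nhdsWithin] with u hu
    rw [Function.comp_apply, hgval u (ne_of_gt hu)]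
    simp only [Complex.ofReal_re]
    exact div_nonneg (ht0 u) (pow_nonneg (le_of_lt hu) m)
  have hre2 : c.re ≤ 0 := by
    apply le_of_tendsto ((Complex.continuous_re.tendsto c).comp (hT.mono_left hlt'))
    filter_upwards [self_mem_nhdsWithin] with u hu
    rw [Function.comp_apply, hgval u (ne_of_lt hu)]
    simp only [Complex.ofReal_re]
    exact div_nonpos_of_nonneg_of_nonpos (ht0 u) (hodd.pow_nonpos (le_of_lt hu))
  have hc0 : c = 0 := by
    apply Complex.ext
    · simp [le_antisymm hre2 hre1]
    · simp [him]
  rw [hc] at hc0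
  have : S.eval w * (w ^ D)⁻¹ ≠ 0 :=
    mul_ne_zero hSw (inv_ne_zero (pow_ne_zero _ hw0))
  exact (mul_ne_zero (mul_ne_zero (pow_ne_zero _ hw0) (pow_ne_zero _ Complex.I_ne_zero)) this) hc0

private lemma patchH2 (D : ℕ) (T : Polynomial ℂ) {w : ℂ} (hw : ‖w‖ = 1)
    (H : ∀ z : ℂ, ‖z‖ = 1 → z ≠ w → ∃ t : ℝ, 0 ≤ t ∧ T.eval z = (t:ℂ) * z ^ D) :
    ∃ t : ℝ, 0 ≤ t ∧ T.eval w = (t:ℂ) * w ^ D := by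
  have hw0 : w ≠ 0 := circleNeZero hw
  set z : ℝ → ℂ := fun u => w * Complex.exp ((u:ℂ) * Complex.I) with hzdef
  set g : ℝ → ℂ := fun u => T.eval (z u) * ((z u) ^ D)⁻¹ with hgdef
  set c : ℂ := T.eval w * (w ^ D)⁻¹ with hc
  have hlt : nhdsWithin (0:ℝ) (Set.Ioi 0) ≤ nhdsWithin 0 {(0:ℝ)}ᶜ :=
    nhdsWithin_mono 0 (fun x hx => ne_of_gt hx)
  have hT : Filter.Tendsto g (nhdsWithin 0 (Set.Ioi 0)) (nhds c) :=
    (tendstoAux D T w hw).mono_left hlt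
  -- on (0,1), z u ≠ w
  have hzne : ∀ u : ℝ, u ∈ Set.Ioo (0:ℝ) 1 → z u ≠ w := by
    intro u hu heq
    have : Complex.exp ((u:ℂ) * Complex.I) = 1 := by
      have heq' : w * Complex.exp ((u:ℂ) * Complex.I) = w * 1 := by rw [mul_one]; exact heq
      exact mul_left_cancel₀ hw0 heq'
    rw [Complex.exp_eq_one_iff] at this
    obtain ⟨n, hn⟩ := this
    have hz0 : ((u - n * (2 * Real.pi) : ℝ) : ℂ) * Complex.I = 0 := by
      push_cast; linear_combination hn
    rcases mul_eq_zero.1 hz0 with h | h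
    swap
    · exact Complex.I_ne_zero h
    have h2 : u = n * (2 * Real.pi) := by
      have := Complex.ofReal_eq_zero.1 h
      linarith
    have hpi : (2:ℝ) < 2 * Real.pi := by nlinarith [Real.pi_gt_three]
    rcases lt_trichotomy (n:ℝ) 0 with h3 | h3 | h3
    · have : (n:ℝ) ≤ -1 := by exact_mod_cast Int.le_of_lt_add_one (by exact_mod_cast h3)
      nlinarith [hu.1, hu.2]
    · have hn0 : n = 0 := by exact_mod_cast h3
      rw [hn0] at h2; push_cast at h2; linarith [hu.1]
    · have : (1:ℝ) ≤ (n:ℝ) := by exact_mod_cast h3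
      nlinarith [hu.1, hu.2]
  choose t ht0 ht using fun (u : ℝ) (hu : u ∈ Set.Ioo (0:ℝ) 1) =>
    H (z u) (circleZ w hw u) (hzne u hu)
  have hmem : Set.Ioo (0:ℝ) 1 ∈ nhdsWithin (0:ℝ) (Set.Ioi 0) :=
    Ioo_mem_nhdsGT_of_mem ⟨le_refl 0, by norm_num⟩
  have hgval : ∀ u : ℝ, ∀ hu : u ∈ Set.Ioo (0:ℝ) 1, g u = ((t u hu : ℝ) : ℂ) := by
    intro u hu
    rw [hgdef]
    simp only
    rw [ht u hu]
    have hzu : z u ≠ 0 := circleNeZero (circleZ w hw u)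
    field_simp
  have him : c.im = 0 := by
    have h1 : Filter.Tendsto (fun u => (g u).im) (nhdsWithin 0 (Set.Ioi 0)) (nhds c.im) :=
      (Complex.continuous_im.tendsto c).comp hT
    have h2 : Filter.Tendsto (fun u => (g u).im) (nhdsWithin 0 (Set.Ioi 0)) (nhds 0) := by
      apply Filter.Tendsto.congr' _ tendsto_const_nhds
      filter_upwards [hmem] with u hu
      rw [hgval u hu]
      exact (Complex.ofReal_im _).symm
    exact tendsto_nhds_unique h1 h2
  have hre : 0 ≤ c.re := by
    apply ge_of_tendsto ((Complex.continuous_re.tendsto c).comp hT)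
    filter_upwards [hmem] with u hu
    rw [Function.comp_apply, hgval u hu]
    rw [Complex.ofReal_re]
    exact ht0 u hu
  refine ⟨c.re, hre, ?_⟩
  have hceq : c = ((c.re : ℝ) : ℂ) := by
    apply Complex.ext
    · simp
    · simp [him]
  have : T.eval w = c * w ^ D := by
    rw [hc]
    field_simp
  rw [this, ← hceq]

private lemma FR : ∀ (d : ℕ) (R : Polynomial ℂ), R.natDegree ≤ 2 * d →
    (∀ z : ℂ, ‖z‖ = 1 → ∃ t : ℝ, 0 ≤ t ∧ R.eval z = (t:ℂ) * z ^ d) →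
    ∃ Q : Polynomial ℂ, Q.natDegree ≤ d ∧ ∀ z : ℂ, ‖z‖ = 1 →
      R.eval z = (((‖Q.eval z‖) ^ 2 : ℝ) : ℂ) * z ^ d := by
  intro d
  induction d with
  | zero =>
    intro R hdeg H2
    have hR : R = C (R.coeff 0) := eq_C_of_natDegree_le_zero (by omega)
    obtain ⟨t, ht0, ht⟩ := H2 1 (by simp)
    rw [hR] at ht ⊢
    simp only [eval_C, one_pow, mul_one] at ht
    refine ⟨C ((Real.sqrt t : ℝ) : ℂ), natDegree_C _ |>.le, ?_⟩
    intro z hz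
    simp only [eval_C, pow_zero, mul_one, ht]
    rw [Complex.norm_real, Real.norm_eq_abs, _root_.abs_of_nonneg (Real.sqrt_nonneg t), Real.sq_sqrt ht0]
  | succ d ih =>
    intro R hdeg H2
    by_cases hR0 : R = 0
    · refine ⟨0, by simp, ?_⟩
      intro z hz
      simp [hR0]
    have hsym := symOfNonneg (d+1) R hdeg H2
    have hcoeff : ∀ j, j ≤ 2*(d+1) → R.coeff j = (starRingEnd ℂ) (R.coeff (2*(d+1) - j)) := by
      intro j hj
      conv_lhs => rw [hsym]
      rw [coeff_reflect, revAt_le hj, coeff_map]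
    -- R is not a nonzero constant
    have hdeg0 : R.natDegree ≠ 0 := by
      intro h
      have hc := hcoeff 0 (by omega)
      rw [coeff_eq_zero_of_natDegree_lt (by omega : R.natDegree < 2*(d+1) - 0)] at hc
      simp only [map_zero] at hc
      exact hR0 (by
        have := eq_C_of_natDegree_le_zero (le_of_eq h)
        rw [this, hc, map_zero])
    obtain ⟨w, hroot⟩ : ∃ w : ℂ, R.IsRoot w := by
      apply Complex.exists_root
      rw [degree_eq_natDegree hR0]
      exact_mod_cast Nat.pos_of_ne_zero hdeg0
    by_cases hw0 : w = 0
    -- Case 1 : root at 0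
    · subst hw0
      have hXdvd : X ∣ R := by
        simpa using (dvd_iff_isRoot (p := R) (a := 0)).2 hroot
      obtain ⟨R₁, hR₁⟩ := hXdvd
      have hR₁0 : R₁ ≠ 0 := by rintro rfl; simp at hR₁; exact hR0 hR₁
      have htop : R.coeff (2*(d+1)) = 0 := by
        rw [hcoeff (2*(d+1)) le_rfl]
        have : R.coeff 0 = 0 := by
          rw [coeff_zero_eq_eval_zero]
          simpa using hroot
        simp [this]
      have hdegR : R.natDegree ≤ 2*d + 1 := by
        rw [natDegree_le_iff_coeff_eq_zero]
        intro N hN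
        rcases eq_or_lt_of_le (by omega : 2*(d+1) ≤ N) with h | h
        · rw [← h]; exact htop
        · exact coeff_eq_zero_of_natDegree_lt (by omega)
      have hdegR₁ : R₁.natDegree ≤ 2*d := by
        have := natDegree_mul (X_ne_zero (R := ℂ)) hR₁0
        rw [← hR₁] at this
        rw [natDegree_X] at this
        omega
      have H2' : ∀ z : ℂ, ‖z‖ = 1 → ∃ t : ℝ, 0 ≤ t ∧ R₁.eval z = (t:ℂ) * z ^ d := by
        intro z hz
        obtain ⟨t, ht0, ht⟩ := H2 z hz
        refine ⟨t, ht0, ?_⟩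
        have hz0 := circleNeZero hz
        rw [hR₁, eval_mul, eval_X] at ht
        have : z * R₁.eval z = z * ((t:ℂ) * z ^ d) := by
          rw [ht]; ring
        exact mul_left_cancel₀ hz0 this
      obtain ⟨Q₁, hQ₁d, hQ₁⟩ := ih R₁ hdegR₁ H2'
      refine ⟨Q₁, by omega, ?_⟩
      intro z hz
      rw [hR₁, eval_mul, eval_X, hQ₁ z hz]
      ring
    -- w ≠ 0 root
    by_cases hw1 : ‖w‖ = 1
    -- Case 2 : root on the circle
    · have hev := evenMult (d+1) R hR0 H2 hw1
      have hm1 : 0 < R.rootMultiplicity w := (rootMultiplicity_pos hR0).2 hroot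
      have hm2 : 2 ≤ R.rootMultiplicity w := by
        rcases hev with ⟨k, hk⟩; omega
      have hdvd : (X - C w) ^ 2 ∣ R :=
        dvd_trans (pow_dvd_pow _ hm2) (R.pow_rootMultiplicity_dvd w)
      obtain ⟨R₁, hR₁⟩ := hdvd
      have hR₁0 : R₁ ≠ 0 := by rintro rfl; simp at hR₁; exact hR0 hR₁
      have hdegR₁ : R₁.natDegree ≤ 2*d := by
        have hXw : (X - C w) ^ 2 ≠ 0 := pow_ne_zero _ (X_sub_C_ne_zero w)
        have := natDegree_mul hXw hR₁0
        rw [← hR₁, natDegree_pow, natDegree_X_sub_C] at this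
        omega
      set R₂ : Polynomial ℂ := C (-w) * R₁ with hR₂def
      -- key circle identity
      have hkey : ∀ z : ℂ, ‖z‖ = 1 →
          (z - w) ^ 2 = -(z * w) * ((Complex.normSq (z - w) : ℝ) : ℂ) := by
        intro z hz
        have h1 : ((Complex.normSq (z - w) : ℝ) : ℂ) = (z - w) * (z⁻¹ - w⁻¹) := by
          rw [← Complex.mul_conj, map_sub, conjCircle hz, conjCircle hw1]
        rw [h1]
        have hz0 := circleNeZero hz
        field_simp
        ring
      have H2'' : ∀ z : ℂ, ‖z‖ = 1 → z ≠ w →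
          ∃ t : ℝ, 0 ≤ t ∧ R₂.eval z = (t:ℂ) * z ^ d := by
        intro z hz hzw
        obtain ⟨t, ht0, ht⟩ := H2 z hz
        have hz0 := circleNeZero hz
        have hzw' : z - w ≠ 0 := sub_ne_zero.2 hzw
        have hns : (Complex.normSq (z - w) : ℝ) ≠ 0 := by
          simpa [Complex.normSq_eq_zero] using hzw'
        refine ⟨t / Complex.normSq (z - w), div_nonneg ht0 (Complex.normSq_nonneg _), ?_⟩
        rw [hR₁, eval_mul, eval_pow, eval_sub, eval_X, eval_C] at ht
        rw [hR₂def, eval_mul, eval_C]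
        have hfac : (z - w) ^ 2 ≠ 0 := pow_ne_zero _ hzw'
        have hR₁z : R₁.eval z = (t:ℂ) * z ^ (d+1) / (z - w) ^ 2 := by
          field_simp at ht ⊢
          linear_combination ht
        rw [hR₁z, hkey z hz]
        have hnsC : ((Complex.normSq (z - w) : ℝ) : ℂ) ≠ 0 := by exact_mod_cast hns
        push_cast
        field_simp
        ring
      have H2' : ∀ z : ℂ, ‖z‖ = 1 → ∃ t : ℝ, 0 ≤ t ∧ R₂.eval z = (t:ℂ) * z ^ d := by
        intro z hz
        by_cases hzw : z = w
        · subst hzw; exact patchH2 d R₂ hw1 H2''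
        · exact H2'' z hz hzw
      obtain ⟨Q₁, hQ₁d, hQ₁⟩ := ih R₂ (by
        rw [hR₂def]
        refine le_trans (natDegree_mul_le) ?_
        simp [hdegR₁]) H2'
      refine ⟨(X - C w) * Q₁, ?_, ?_⟩
      · refine le_trans natDegree_mul_le ?_
        rw [natDegree_X_sub_C]
        omega
      intro z hz
      have hz0 := circleNeZero hz
      have hw0' : w ≠ 0 := circleNeZero hw1
      have hQval := hQ₁ z hz
      rw [hR₂def, eval_mul, eval_C] at hQval
      -- R₁.eval z = -w⁻¹ * R₂... directly: (-w) * R₁.eval z = |Q₁|² z^d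
      have habs : ((‖((X - C w) * Q₁).eval z‖) ^ 2 : ℝ) =
          Complex.normSq (z - w) * (‖Q₁.eval z‖) ^ 2 := by
        rw [eval_mul, norm_mul, mul_pow, eval_sub, eval_X, eval_C, Complex.sq_norm]
      rw [hR₁, eval_mul, eval_pow, eval_sub, eval_X, eval_C, habs, hkey z hz]
      have hww : w * (starRingEnd ℂ) w = 1 := by
        rw [Complex.mul_conj]
        norm_cast
        rw [← Complex.sq_norm, hw1]; norm_num
      -- from hQval : -w * R₁.eval z = |Q₁|² z^d deduce R₁.eval z = -w⁻¹ |Q₁|² z^d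
      have hR₁z : R₁.eval z = -w⁻¹ * ((((‖Q₁.eval z‖) ^ 2 : ℝ)) : ℂ) * z ^ d := by
        have h5 : w * w⁻¹ = 1 := mul_inv_cancel₀ hw0'
        linear_combination (norm := (push_cast; ring1)) (-w⁻¹) * hQval +
          (-(R₁.eval z)) * h5
      rw [hR₁z]
      push_cast
      field_simp
      ring
    -- Case 3 : root off the circle, w ≠ 0
    · have hfun : ∀ z : ℂ, z ≠ 0 →
          R.eval z = z ^ (2*(d+1)) * (starRingEnd ℂ) (R.eval (((starRingEnd ℂ) z)⁻¹)) := by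
        intro z hz0
        conv_lhs => rw [hsym]
        rw [evalReflect _ (le_trans natDegree_map_le hdeg) hz0, evalMapConj, map_inv₀]
      set v : ℂ := ((starRingEnd ℂ) w)⁻¹ with hvdef
      have hcw0 : (starRingEnd ℂ) w ≠ 0 := by
        simpa using hw0
      have hv0 : v ≠ 0 := inv_ne_zero hcw0
      have hvroot : R.IsRoot v := by
        have := hfun v hv0
        rw [IsRoot]
        rw [this]
        have : ((starRingEnd ℂ) v)⁻¹ = w := by
          rw [hvdef, map_inv₀, Complex.conj_conj, inv_inv]
        rw [this]
        rw [IsRoot] at hroot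
        rw [hroot, map_zero, mul_zero]
      have hvw : v ≠ w := by
        intro h
        apply hw1
        have hww : w * (starRingEnd ℂ) w = 1 := by
          rw [hvdef] at h
          field_simp at h
          linear_combination -h
        have h2 : ((Complex.normSq w : ℝ) : ℂ) = 1 := by
          rw [← Complex.mul_conj]; exact hww
        have h3 : Complex.normSq w = 1 := by exact_mod_cast h2
        have h4 : ‖w‖ ^ 2 = 1 := by rw [Complex.sq_norm, h3]
        nlinarith [norm_nonneg w]
      have hcop : IsCoprime (X - C w) (X - C v) :=
        isCoprime_X_sub_C_of_isUnit_sub (sub_ne_zero.2 (Ne.symm hvw)).isUnit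
      have hdvd : (X - C w) * (X - C v) ∣ R :=
        hcop.mul_dvd ((dvd_iff_isRoot).2 hroot) ((dvd_iff_isRoot).2 hvroot)
      obtain ⟨R₁, hR₁⟩ := hdvd
      have hR₁0 : R₁ ≠ 0 := by rintro rfl; simp at hR₁; exact hR0 hR₁
      have hdegR₁ : R₁.natDegree ≤ 2*d := by
        have hA : (X - C w) * (X - C v) ≠ 0 :=
          mul_ne_zero (X_sub_C_ne_zero w) (X_sub_C_ne_zero v)
        have := natDegree_mul hA hR₁0
        rw [← hR₁, natDegree_mul (X_sub_C_ne_zero w) (X_sub_C_ne_zero v),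
          natDegree_X_sub_C, natDegree_X_sub_C] at this
        omega
      set R₂ : Polynomial ℂ := C (-((starRingEnd ℂ) w)⁻¹) * R₁ with hR₂def
      have hkey : ∀ z : ℂ, ‖z‖ = 1 →
          (z - w) * (z - v) = -(z * ((starRingEnd ℂ) w)⁻¹) *
            ((Complex.normSq (z - w) : ℝ) : ℂ) := by
        intro z hz
        have h1 : ((Complex.normSq (z - w) : ℝ) : ℂ) = (z - w) * (z⁻¹ - (starRingEnd ℂ) w) := by
          rw [← Complex.mul_conj, map_sub, conjCircle hz]
        rw [h1, hvdef]
        have hz0 := circleNeZero hz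
        field_simp
        ring
      have hzwne : ∀ z : ℂ, ‖z‖ = 1 → z - w ≠ 0 := by
        intro z hz h
        rw [sub_eq_zero] at h
        rw [h] at hz
        exact hw1 hz
      have H2' : ∀ z : ℂ, ‖z‖ = 1 → ∃ t : ℝ, 0 ≤ t ∧ R₂.eval z = (t:ℂ) * z ^ d := by
        intro z hz
        obtain ⟨t, ht0, ht⟩ := H2 z hz
        have hz0 := circleNeZero hz
        have hzw' := hzwne z hz
        have hns : (Complex.normSq (z - w) : ℝ) ≠ 0 := by
          simpa [Complex.normSq_eq_zero] using hzw'
        refine ⟨t / Complex.normSq (z - w), div_nonneg ht0 (Complex.normSq_nonneg _), ?_⟩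
        rw [hR₁, eval_mul, eval_mul, eval_sub, eval_sub, eval_X, eval_C, eval_C] at ht
        rw [hR₂def, eval_mul, eval_C]
        have hvz : z - v ≠ 0 := by
          intro h
          rw [sub_eq_zero] at h
          apply hw1
          have : ‖v‖ = 1 := by rw [← h, hz]
          rw [hvdef, norm_inv, Complex.norm_conj] at this
          exact inv_eq_one.mp this
        have hR₁z : R₁.eval z = (t:ℂ) * z ^ (d+1) / ((z - w) * (z - v)) := by
          field_simp at ht ⊢
          linear_combination ht
        rw [hR₁z, hkey z hz]
        have hnsC : ((Complex.normSq (z - w) : ℝ) : ℂ) ≠ 0 := by exact_mod_cast hns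
        push_cast
        field_simp
        ring
      obtain ⟨Q₁, hQ₁d, hQ₁⟩ := ih R₂ (by
        rw [hR₂def]
        refine le_trans (natDegree_mul_le) ?_
        simp [hdegR₁]) H2'
      refine ⟨(X - C w) * Q₁, ?_, ?_⟩
      · refine le_trans natDegree_mul_le ?_
        rw [natDegree_X_sub_C]
        omega
      intro z hz
      have hz0 := circleNeZero hz
      have hQval := hQ₁ z hz
      rw [hR₂def, eval_mul, eval_C] at hQval
      have habs : ((‖((X - C w) * Q₁).eval z‖) ^ 2 : ℝ) =
          Complex.normSq (z - w) * (‖Q₁.eval z‖) ^ 2 := by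
        rw [eval_mul, norm_mul, mul_pow, eval_sub, eval_X, eval_C, Complex.sq_norm]
      rw [hR₁, eval_mul, eval_mul, eval_sub, eval_sub, eval_X, eval_C, eval_C, habs, hkey z hz]
      have hR₁z : R₁.eval z = -((starRingEnd ℂ) w) *
          ((((‖Q₁.eval z‖) ^ 2 : ℝ)) : ℂ) * z ^ d := by
        have h5 : (starRingEnd ℂ) w * ((starRingEnd ℂ) w)⁻¹ = 1 := mul_inv_cancel₀ hcw0
        linear_combination (norm := (push_cast; ring1)) (-((starRingEnd ℂ) w)) * hQval +
          (-(R₁.eval z)) * h5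
      rw [hR₁z]
      push_cast
      field_simp
      ring

theorem complementary_polynomial_exists (P : Polynomial ℂ) (d : ℕ) (hd : P.natDegree = d)
    (hP : ∀ z : ℂ, ‖z‖ = 1 → ‖P.eval z‖ ≤ 1)
    (hPne : ¬∀ z : ℂ, ‖z‖ = 1 → ‖P.eval z‖ = 1) :
    ∃ Q : Polynomial ℂ, Q.natDegree ≤ d ∧
      ∀ z : ℂ, ‖z‖ = 1 →
        ‖P.eval z‖ ^ 2 + ‖Q.eval z‖ ^ 2 = 1 := by
  set Pc : Polynomial ℂ := P.map (starRingEnd ℂ) with hPcdef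
  set Ps : Polynomial ℂ := reflect d Pc with hPsdef
  have hPcdeg : Pc.natDegree ≤ d := le_trans natDegree_map_le hd.le
  have hPsdeg : Ps.natDegree ≤ d := natDegree_reflect_le Pc hPcdeg
  have hPs_eval : ∀ z : ℂ, ‖z‖ = 1 →
      Ps.eval z = z ^ d * (starRingEnd ℂ) (P.eval z) := by
    intro z hz
    have hz0 := circleNeZero hz
    rw [hPsdef, evalReflect Pc hPcdeg hz0, hPcdef, evalMapConj]
    congr 2
    rw [map_inv₀, conjCircle hz, inv_inv]
  set R : Polynomial ℂ := X ^ d - P * Ps with hRdef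
  have hdegR : R.natDegree ≤ 2 * d := by
    rw [hRdef]
    refine le_trans (natDegree_sub_le _ _) ?_
    refine max_le ?_ ?_
    · rw [natDegree_X_pow]; omega
    · refine le_trans natDegree_mul_le ?_; omega
  have hReval : ∀ z : ℂ, ‖z‖ = 1 →
      R.eval z = ((1 - ‖P.eval z‖ ^ 2 : ℝ) : ℂ) * z ^ d := by
    intro z hz
    have hm : P.eval z * (starRingEnd ℂ) (P.eval z) = (Complex.normSq (P.eval z) : ℂ) :=
      Complex.mul_conj _
    rw [hRdef, eval_sub, eval_mul, eval_pow, eval_X, hPs_eval z hz]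
    push_cast [Complex.sq_norm]
    linear_combination (-(z ^ d)) * hm
  have H2 : ∀ z : ℂ, ‖z‖ = 1 → ∃ t : ℝ, 0 ≤ t ∧ R.eval z = (t:ℂ) * z ^ d := by
    intro z hz
    refine ⟨1 - ‖P.eval z‖ ^ 2, ?_, hReval z hz⟩
    have h1 := hP z hz
    have h2 : 0 ≤ ‖P.eval z‖ := norm_nonneg _
    nlinarith
  obtain ⟨Q, hQd, hQ⟩ := FR d R hdegR H2
  refine ⟨Q, hQd, ?_⟩
  intro z hz
  have hz0 := circleNeZero hz
  have h1 := hQ z hz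
  rw [hReval z hz] at h1
  have h3 := mul_right_cancel₀ (pow_ne_zero d hz0) h1
  have h4 : 1 - ‖P.eval z‖ ^ 2 = ‖Q.eval z‖ ^ 2 := by
    exact_mod_cast h3
  linarith
end
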